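/- If y ∈ ℝ and Q(γ̃_M + iy) = 0, then y = 0. That is, γ̃_M is the only zero of Q whose real part equals γ̃_M. -/

import Mathlib

/-- `Q(s) = 1 - 2∑_{k≥1} exp(-s√(k(k+2))/2)`. -/
noncomputable def Qfun (s : ℂ) : ℂ :=
  1 - 2 * ∑' k : ℕ,
    Complex.exp (-(s * (Real.sqrt (((k : ℝ) + 1) * (((k : ℝ) + 1) + 2)) : ℂ) / 2))

/-- if `γ̃_M` is the unique positive real with
`∑_{k≥1} exp(-γ̃_M√(k(k+2))/2) = 1/2` and `Q(γ̃_M + iy) = 0` for a real `y`, then `y = 0`;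
i.e. `γ̃_M` is the only zero of `Q` with real part `γ̃_M`. -/
theorem stmt_12 (γ : ℝ) (hγpos : 0 < γ)
    (hγ : ∑' k : ℕ,
        Real.exp (-(γ * Real.sqrt (((k : ℝ) + 1) * (((k : ℝ) + 1) + 2)) / 2)) = 1 / 2)
    (y : ℝ) (hQ : Qfun ((γ : ℂ) + Complex.I * (y : ℂ)) = 0) : y = 0 := by
  set a : ℕ → ℝ := fun k => Real.sqrt (((k : ℝ) + 1) * (((k : ℝ) + 1) + 2)) with ha
  have hapos : ∀ k, 0 < a k := by
    intro k
    apply Real.sqrt_pos.2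
    positivity
  -- real summability
  have hf : ∀ k, (0:ℝ) < Real.exp (-(γ * a k / 2)) := fun k => Real.exp_pos _
  have hSreal : Summable (fun k => Real.exp (-(γ * a k / 2))) := by
    by_contra h
    rw [tsum_eq_zero_of_not_summable h] at hγ
    norm_num at hγ
  -- rewrite the complex exponent
  have hz : ∀ k : ℕ, -(((γ : ℂ) + Complex.I * (y : ℂ)) * (a k : ℂ) / 2)
      = (↑(-(γ * a k / 2)) : ℂ) + ↑(-(y * a k / 2)) * Complex.I := by
    intro k
    push_cast
    ring
  have hre : ∀ k : ℕ,
      (Complex.exp (-(((γ : ℂ) + Complex.I * (y : ℂ)) * (a k : ℂ) / 2))).re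
        = Real.exp (-(γ * a k / 2)) * Real.cos (y * a k / 2) := by
    intro k
    rw [hz k, Complex.exp_re]
    simp [Real.cos_neg]
  -- complex summability
  have hSc : Summable (fun k : ℕ =>
      Complex.exp (-(((γ : ℂ) + Complex.I * (y : ℂ)) * (a k : ℂ) / 2))) := by
    apply Summable.of_norm
    have : ∀ k : ℕ, ‖Complex.exp (-(((γ : ℂ) + Complex.I * (y : ℂ)) * (a k : ℂ) / 2))‖
        = Real.exp (-(γ * a k / 2)) := by
      intro k
      rw [hz k, Complex.norm_exp]
      simp
    simpa [this] using hSreal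
  -- from hQ, the complex tsum equals 1/2
  have hQ' : (1:ℂ) - 2 * ∑' k : ℕ,
      Complex.exp (-(((γ : ℂ) + Complex.I * (y : ℂ)) * (a k : ℂ) / 2)) = 0 := hQ
  have hsum : (∑' k : ℕ,
      Complex.exp (-(((γ : ℂ) + Complex.I * (y : ℂ)) * (a k : ℂ) / 2))) = 1/2 := by
    linear_combination (-(1:ℂ)/2) * hQ'
  -- take real parts
  have hre_sum : (∑' k : ℕ, Real.exp (-(γ * a k / 2)) * Real.cos (y * a k / 2)) = 1/2 := by
    have := congrArg Complex.re hsum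
    rw [Complex.re_tsum hSc] at this
    simpa [hre] using this
  -- summability of the cosine-weighted series
  have hScos : Summable (fun k : ℕ => Real.exp (-(γ * a k / 2)) * Real.cos (y * a k / 2)) := by
    apply Summable.of_norm_bounded hSreal
    intro k
    rw [norm_mul, Real.norm_eq_abs, Real.norm_eq_abs, abs_of_pos (hf k)]
    nlinarith [Real.abs_cos_le_one (y * a k / 2), (hf k).le, abs_nonneg (Real.cos (y * a k / 2))]
  -- the difference series is nonneg, summable, with sum zero
  have hdiff : Summable (fun k : ℕ =>
      Real.exp (-(γ * a k / 2)) * (1 - Real.cos (y * a k / 2))) := by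
    have := hSreal.sub hScos
    simpa [mul_sub] using this
  have hdiffsum : (∑' k : ℕ,
      Real.exp (-(γ * a k / 2)) * (1 - Real.cos (y * a k / 2))) = 0 := by
    have : (∑' k : ℕ, Real.exp (-(γ * a k / 2)) * (1 - Real.cos (y * a k / 2)))
        = (∑' k, Real.exp (-(γ * a k / 2)))
          - ∑' k, Real.exp (-(γ * a k / 2)) * Real.cos (y * a k / 2) := by
      rw [← Summable.tsum_sub hSreal hScos]
      exact tsum_congr fun k => by ring
    rw [this, hγ, hre_sum]
    ring
  have hnonneg : ∀ k : ℕ, 0 ≤ Real.exp (-(γ * a k / 2)) * (1 - Real.cos (y * a k / 2)) := by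
    intro k
    have := Real.cos_le_one (y * a k / 2)
    nlinarith [(hf k).le]
  have hcos1 : ∀ k : ℕ, Real.cos (y * a k / 2) = 1 := by
    intro k
    have hle : Real.exp (-(γ * a k / 2)) * (1 - Real.cos (y * a k / 2)) ≤ 0 := by
      rw [← hdiffsum]
      exact Summable.le_tsum hdiff k (fun j _ => hnonneg j)
    have h0 : Real.exp (-(γ * a k / 2)) * (1 - Real.cos (y * a k / 2)) = 0 :=
      le_antisymm hle (hnonneg k)
    rcases mul_eq_zero.1 h0 with h | h
    · exact absurd h (hf k).ne'
    · linarith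
  -- extract the two integer relations
  obtain ⟨m, hm⟩ := (Real.cos_eq_one_iff _).1 (hcos1 0)
  obtain ⟨n, hn⟩ := (Real.cos_eq_one_iff _).1 (hcos1 1)
  have ha0 : a 0 = Real.sqrt 3 := by norm_num [ha]
  have ha1 : a 1 = Real.sqrt 8 := by
    have h18 : (((1:ℕ):ℝ) + 1) * (((1:ℕ):ℝ) + 1 + 2) = 8 := by norm_num
    simp only [ha]
    rw [h18]
  rw [ha0] at hm
  rw [ha1] at hn
  by_contra hy
  have hπ := Real.pi_pos
  have hmne : (m:ℝ) ≠ 0 := by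
    intro h
    rw [h] at hm
    have h3 : (0:ℝ) < Real.sqrt 3 := by positivity
    have h0 : y * Real.sqrt 3 = 0 := by nlinarith [hm]
    rcases mul_eq_zero.1 h0 with h' | h'
    · exact hy h'
    · exact h3.ne' h'
  have hnne : (n:ℝ) ≠ 0 := by
    intro h
    rw [h] at hn
    have h8 : (0:ℝ) < Real.sqrt 8 := by positivity
    have h0 : y * Real.sqrt 8 = 0 := by nlinarith [hn]
    rcases mul_eq_zero.1 h0 with h' | h'
    · exact hy h'
    · exact h8.ne' h'
  -- n * √3 = m * √8
  have key : (n:ℝ) * Real.sqrt 3 = (m:ℝ) * Real.sqrt 8 := by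
    have h1 : (n:ℝ) * (y * Real.sqrt 3 / 2) = (n:ℝ) * ((m:ℝ) * (2 * Real.pi)) := by
      rw [hm]
    have h2 : (m:ℝ) * (y * Real.sqrt 8 / 2) = (m:ℝ) * ((n:ℝ) * (2 * Real.pi)) := by
      rw [hn]
    have : y * ((n:ℝ) * Real.sqrt 3 - (m:ℝ) * Real.sqrt 8) = 0 := by nlinarith [h1, h2]
    rcases mul_eq_zero.1 this with h | h
    · exact absurd h hy
    · linarith
  -- hence √6 is rational, contradiction
  have h6 : Irrational (Real.sqrt 6) := by
    have hns : ¬ IsSquare (6:ℕ) := by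
      rintro ⟨r, hr⟩
      have : r ≤ 6 := by nlinarith
      interval_cases r <;> omega
    simpa using irrational_sqrt_natCast_iff.2 hns
  have h8 : Real.sqrt 8 = 2 * Real.sqrt 2 := by
    rw [show (8:ℝ) = 2^2 * 2 by norm_num, Real.sqrt_mul (by positivity),
      Real.sqrt_sq (by norm_num : (0:ℝ) ≤ 2)]
  have h63 : Real.sqrt 6 = Real.sqrt 3 * Real.sqrt 2 := by
    rw [← Real.sqrt_mul (by norm_num)]
    norm_num
  have h22 : Real.sqrt 2 * Real.sqrt 2 = 2 := Real.mul_self_sqrt (by norm_num)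
  have key2 : (n:ℝ) * Real.sqrt 6 = 4 * (m:ℝ) := by
    linear_combination (n:ℝ) * h63 + Real.sqrt 2 * key + (m:ℝ) * Real.sqrt 2 * h8
      + 2 * (m:ℝ) * h22
  have : Real.sqrt 6 = ((4 * m / n : ℚ) : ℝ) := by
    push_cast
    field_simp
    linarith [key2]
  exact h6 ⟨_, this.symm⟩
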